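/- A finite abelian group G satisfies α(G) = 3/4 if and only if G is isomorphic to (Z/2)^n × Z/4 for some natural number n (including n = 0, i.e., G ≅ Z/4). -/

import Mathlib

open Finset Subgroup

section Counting
variable {G : Type*} [Group G] [Fintype G]

lemma isCyclic_zpowers (g : G) : IsCyclic (Subgroup.zpowers g) := by
  constructor
  refine ⟨⟨g, Subgroup.mem_zpowers g⟩, ?_⟩
  rintro ⟨x, hx⟩
  obtain ⟨n, rfl⟩ := Subgroup.mem_zpowers_iff.mp hx
  exact ⟨n, by ext; simp⟩

open scoped Classical in
lemma gen_count (H : Subgroup G) (hH : IsCyclic H) :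
    (Finset.univ.filter fun g : G => Subgroup.zpowers g = H).card = (Nat.card H).totient := by
  classical
  haveI := hH
  have hcard : Nat.card H = Fintype.card H := Nat.card_eq_fintype_card
  rw [hcard, ← IsCyclic.card_orderOf_eq_totient (α := H) (d := Fintype.card H) dvd_rfl]
  apply Finset.card_bij (fun (g : G) hg => (⟨g, by
      have := (Finset.mem_filter.mp hg).2; rw [← this]; exact Subgroup.mem_zpowers g⟩ : H))
  · intro g hg
    have hg' := (Finset.mem_filter.mp hg).2
    simp only [Finset.mem_filter, Finset.mem_univ, true_and]
    rw [← Subgroup.orderOf_coe]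
    show orderOf g = Fintype.card ↥H
    rw [← Nat.card_zpowers, hg', hcard]
  · intro a ha b hb hab
    exact congrArg Subtype.val hab
  · intro h hh
    have hh' := (Finset.mem_filter.mp hh).2
    refine ⟨(h : G), ?_, rfl⟩
    simp only [Finset.mem_filter, Finset.mem_univ, true_and]
    apply Subgroup.eq_of_le_of_card_ge
    · rw [Subgroup.zpowers_le]; exact h.2
    · rw [Nat.card_zpowers, Subgroup.orderOf_coe, hh', hcard]


open scoped Classical in
lemma card_eq_sum_totient :
    Fintype.card G = ∑ H ∈ Finset.univ.filter (fun H : Subgroup G => IsCyclic H),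
      (Nat.card H).totient := by
  classical
  rw [← Finset.card_univ,
    Finset.card_eq_sum_card_fiberwise (f := fun g : G => Subgroup.zpowers g)
      (t := Finset.univ.filter (fun H : Subgroup G => IsCyclic H))
      (fun g _ => by simp [_root_.isCyclic_zpowers g])]
  refine Finset.sum_congr rfl fun H hH => ?_
  have : Finset.univ.filter (fun g : G => Subgroup.zpowers g = H)
      = Finset.filter (fun g => Subgroup.zpowers g = H) Finset.univ := rfl
  rw [← gen_count H (Finset.mem_filter.mp hH).2]

open scoped Classical in
lemma small_count :
    ((Finset.univ.filter fun H : Subgroup G => IsCyclic H).filter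
        fun H : Subgroup G => Nat.card H ≤ 2).card
      = (Finset.univ.filter fun x : G => x ^ 2 = 1).card := by
  classical
  set t := (Finset.univ.filter fun H : Subgroup G => IsCyclic H).filter
      fun H : Subgroup G => Nat.card H ≤ 2 with ht
  rw [Finset.card_eq_sum_card_fiberwise (f := fun g : G => Subgroup.zpowers g) (t := t)
      (fun g hg => by
        have hg2 : g ^ 2 = 1 := (Finset.mem_filter.mp hg).2
        simp only [Finset.mem_coe, ht, Finset.mem_filter, Finset.mem_univ, true_and]
        refine ⟨_root_.isCyclic_zpowers g, ?_⟩
        rw [Nat.card_zpowers]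
        exact Nat.le_of_dvd (by norm_num) (orderOf_dvd_of_pow_eq_one hg2))]
  rw [Finset.card_eq_sum_ones t]
  refine Finset.sum_congr rfl fun H hH => ?_
  obtain ⟨hHc, hH2⟩ := Finset.mem_filter.mp hH
  have hcyc : IsCyclic H := (Finset.mem_filter.mp hHc).2
  have hfib : (Finset.univ.filter fun x : G => x ^ 2 = 1).filter
      (fun g => Subgroup.zpowers g = H) = Finset.univ.filter fun g => Subgroup.zpowers g = H := by
    ext g
    simp only [Finset.mem_filter, Finset.mem_univ, true_and]
    refine ⟨fun h => h.2, fun h => ⟨?_, h⟩⟩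
    have : orderOf g ≤ 2 := by rw [← Nat.card_zpowers, h]; exact hH2
    have hpos : 0 < orderOf g := by
      have : Finite G := Finite.of_fintype G
      exact orderOf_pos g
    interval_cases h' : orderOf g
    · exact orderOf_eq_one_iff.mp h' ▸ by rw [orderOf_eq_one_iff.mp h']; simp
    · rw [← h', pow_orderOf_eq_one]
  rw [hfib, gen_count H hcyc]
  have hpos : 0 < Nat.card H := Nat.card_pos
  interval_cases h' : Nat.card H <;> simp

end Counting
section Char
variable {G : Type*} [CommGroup G] [Finite G]

lemma card_ker_sq :
    Nat.card {x : G // x ^ 2 = 1}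
      = Nat.card (MonoidHom.ker (powMonoidHom 2 : G →* G)) :=
  Nat.card_congr (Equiv.subtypeEquivRight fun x => by
    simp [MonoidHom.mem_ker, powMonoidHom_apply])

lemma pow_four_of_card (h : Nat.card G = 2 * Nat.card {x : G // x ^ 2 = 1}) :
    ∀ g : G, g ^ 4 = 1 := by
  set K := MonoidHom.ker (powMonoidHom 2 : G →* G) with hK
  rw [card_ker_sq] at h
  have hq : Nat.card (G ⧸ K) = 2 := by
    have h1 := Subgroup.card_eq_card_quotient_mul_card_subgroup K
    have h2 : 0 < Nat.card K := Nat.card_pos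
    rw [h] at h1
    exact (Nat.eq_of_mul_eq_mul_right h2 h1.symm)
  intro g
  have : ((g : G ⧸ K)) ^ 2 = 1 := by
    have h0 := pow_card_eq_one' (x := (g : G ⧸ K))
    rwa [hq] at h0
  rw [← QuotientGroup.mk_pow, QuotientGroup.eq_one_iff] at this
  have h2 : (g ^ 2) ^ 2 = 1 := this
  rw [← pow_mul] at h2
  exact h2
end Char


section Structure
variable {G : Type*} [CommGroup G] [Finite G]

lemma mem_zpowers_sq_eq {x g : G} (h : orderOf x = 4) (hg : g ∈ Subgroup.zpowers x)
    (hg2 : g ^ 2 = 1) : g = 1 ∨ g = x ^ 2 := by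
  obtain ⟨n, rfl⟩ := Subgroup.mem_zpowers_iff.mp hg
  have h1 : x ^ (n * 2) = 1 := by rw [zpow_mul]; exact_mod_cast hg2
  have h2 : ((orderOf x : ℤ)) ∣ n * 2 := orderOf_dvd_iff_zpow_eq_one.mpr h1
  rw [h] at h2
  obtain ⟨m, hm⟩ : (2 : ℤ) ∣ n := by omega
  subst hm
  have h4 : x ^ (4:ℤ) = 1 := by
    have : x ^ (4:ℕ) = 1 := by rw [← h]; exact pow_orderOf_eq_one x
    exact_mod_cast this
  rcases Int.even_or_odd m with ⟨j, hj⟩ | ⟨j, hj⟩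
  · left
    subst hj
    rw [show (2:ℤ) * (j + j) = 4 * j by ring, zpow_mul, h4, one_zpow]
  · right
    subst hj
    rw [show (2:ℤ) * (2 * j + 1) = 4 * j + 2 by ring, zpow_add, zpow_mul, h4, one_zpow, one_mul]
    exact_mod_cast rfl

theorem structure_of_card (h4 : ∀ g : G, g ^ 4 = 1)
    (h : Nat.card G = 2 * Nat.card {x : G // x ^ 2 = 1}) :
    ∃ n : ℕ, Nonempty (G ≃* Multiplicative ((Fin n → ZMod 2) × ZMod 4)) := by
  classical
  set K := MonoidHom.ker (powMonoidHom 2 : G →* G) with hKdef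
  have hmemK : ∀ g : G, g ∈ K ↔ g ^ 2 = 1 := fun g => by
    simp [hKdef, MonoidHom.mem_ker, powMonoidHom_apply]
  have hcardK : Nat.card G = 2 * Nat.card K := by rw [h, card_ker_sq]
  have hGpos : 0 < Nat.card G := Nat.card_pos
  have hKne : ∃ x : G, x ∉ K := by
    by_contra hall
    push_neg at hall
    have htop : K = ⊤ := (Subgroup.eq_top_iff' K).mpr hall
    rw [htop, Subgroup.card_top] at hcardK
    omega
  obtain ⟨x, hx⟩ := hKne
  have hx2 : x ^ 2 ≠ 1 := fun hc => hx ((hmemK x).mpr hc)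
  have hordx : orderOf x = 4 := by
    have hdvd : orderOf x ∣ 4 := orderOf_dvd_of_pow_eq_one (h4 x)
    have hle : orderOf x ≤ 4 := Nat.le_of_dvd (by norm_num) hdvd
    have hpos : 0 < orderOf x := orderOf_pos x
    interval_cases hoc : orderOf x
    · exact absurd (by rw [orderOf_eq_one_iff.mp hoc]; simp : x ^ 2 = 1) hx2
    · exact absurd (by rw [← hoc]; exact pow_orderOf_eq_one x : x ^ 2 = 1) hx2
    · norm_num at hdvd
    · rfl
  set z := x ^ 2 with hzdef
  have hzK : z ∈ K := (hmemK z).mpr (by rw [hzdef, ← pow_mul]; exact h4 x)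
  have hzne : z ≠ 1 := hx2
  have hsqK : ∀ k : K, k ^ 2 = 1 := fun k => Subtype.ext (by push_cast; exact (hmemK k).mp k.2)
  have h2smul : ∀ a : Additive K, (2 : ℕ) • a = 0 := fun a => by
    rw [show a = Additive.ofMul (Additive.toMul a) from rfl, ← ofMul_pow, hsqK]
    rfl
  letI : Module (ZMod 2) (Additive K) := AddCommGroup.zmodModule h2smul
  haveI : Fact (Nat.Prime 2) := ⟨Nat.prime_two⟩
  set z' : Additive K := Additive.ofMul (⟨z, hzK⟩ : K) with hz'
  have hz'0 : z' ≠ 0 := by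
    simp only [hz', ofMul_eq_zero]
    intro hc
    exact hzne (congrArg Subtype.val hc)
  obtain ⟨W, hW⟩ := Submodule.exists_isCompl (Submodule.span (ZMod 2) {z'})
  have hcardspan : Nat.card (Submodule.span (ZMod 2) {z'}) = 2 := by
    rw [← Nat.card_congr (LinearEquiv.toSpanNonzeroSingleton (ZMod 2) (Additive K) z' hz'0).toEquiv]
    rw [Nat.card_eq_fintype_card, ZMod.card]
  have hKW : Nat.card K = 2 * Nat.card W := by
    have e := Submodule.prodEquivOfIsCompl _ W hW
    have h1 : Nat.card (Additive K) = Nat.card (Submodule.span (ZMod 2) {z'}) * Nat.card W := by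
      rw [← Nat.card_prod, Nat.card_congr e.toEquiv]
    rw [hcardspan] at h1
    exact (Nat.card_congr Additive.ofMul).trans h1
  -- the complement subgroup C
  set C0 : Subgroup K := Subgroup.toAddSubgroup.symm W.toAddSubgroup with hC0
  have hmemC0 : ∀ k : K, k ∈ C0 ↔ Additive.ofMul k ∈ W := fun k => Iff.rfl
  set C : Subgroup G := C0.map K.subtype with hC
  have hcardC : Nat.card C = Nat.card W := by
    have e1 : C0 ≃* C := Subgroup.equivMapOfInjective C0 K.subtype K.subtype_injective
    have e2 : C0 ≃ W :=
      { toFun := fun k => ⟨Additive.ofMul k.1, (hmemC0 _).mp k.2⟩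
        invFun := fun w => ⟨Additive.toMul w.1, (hmemC0 _).mpr w.2⟩
        left_inv := fun k => rfl
        right_inv := fun w => rfl }
    rw [← Nat.card_congr e1.toEquiv, Nat.card_congr e2]
  have hCK : C ≤ K := by
    rintro g hg
    obtain ⟨k, _, rfl⟩ := Subgroup.mem_map.mp hg
    exact k.2
  have hzC : z ∉ C := by
    intro hzc
    obtain ⟨k, hk, hkg⟩ := Subgroup.mem_map.mp hzc
    have hkz : k = (⟨z, hzK⟩ : K) := Subtype.ext hkg
    rw [hkz] at hk
    have hzW : z' ∈ W := (hmemC0 _).mp hk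
    have : z' = 0 := by
      have hd := hW.disjoint
      rw [Submodule.disjoint_def] at hd
      exact hd z' (Submodule.mem_span_singleton_self z') hzW
    exact hz'0 this
  set X := Subgroup.zpowers x with hX
  have hXC : ∀ g : G, g ∈ X → g ∈ C → g = 1 := by
    intro g hgX hgC
    have hg2 : g ^ 2 = 1 := (hmemK g).mp (hCK hgC)
    rcases mem_zpowers_sq_eq hordx hgX hg2 with h1 | h1
    · exact h1
    · rw [h1] at hgC
      exact absurd hgC hzC
  -- the product map
  set φ : (X × C) →* G := (X.subtype).coprod (C.subtype) with hφ
  have hinj : Function.Injective φ := by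
    rw [injective_iff_map_eq_one]
    rintro ⟨a, b⟩ hab
    have hab' : (a : G) * (b : G) = 1 := hab
    have haC : (a : G) ∈ C := by
      have : (a : G) = (b : G)⁻¹ := by
        rw [eq_inv_iff_mul_eq_one]; exact hab'
      rw [this]
      exact C.inv_mem b.2
    have ha1 : (a : G) = 1 := hXC a a.2 haC
    have hb1 : (b : G) = 1 := by
      rw [ha1, one_mul] at hab'
      exact hab'
    exact Prod.ext (Subtype.ext ha1) (Subtype.ext hb1)
  have hcards : Nat.card (X × C) = Nat.card G := by
    rw [Nat.card_prod, hcardC, hX, Nat.card_zpowers, hordx, hcardK, hKW]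
    ring
  have e1 : (X × C) ≃* G :=
    MulEquiv.ofBijective φ ((Nat.bijective_iff_injective_and_card φ).mpr ⟨hinj, hcards⟩)
  -- C is an elementary abelian 2-group
  have hsqC : ∀ c : C, c ^ 2 = 1 := fun c =>
    Subtype.ext (by push_cast; exact (hmemK c).mp (hCK c.2))
  have h2smulC : ∀ a : Additive C, (2 : ℕ) • a = 0 := fun a => by
    rw [show a = Additive.ofMul (Additive.toMul a) from rfl, ← ofMul_pow, hsqC]
    rfl
  letI : Module (ZMod 2) (Additive C) := AddCommGroup.zmodModule h2smulC
  set n := Module.finrank (ZMod 2) (Additive C) with hn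
  have eC : Additive C ≃ₗ[ZMod 2] (Fin n → ZMod 2) := (Module.finBasis (ZMod 2) (Additive C)).equivFun
  have eCmul : C ≃* Multiplicative (Fin n → ZMod 2) := AddEquiv.toMultiplicativeRight eC.toAddEquiv
  haveI : IsCyclic X := by
    constructor
    refine ⟨⟨x, Subgroup.mem_zpowers x⟩, ?_⟩
    rintro ⟨g, hg⟩
    obtain ⟨m, rfl⟩ := Subgroup.mem_zpowers_iff.mp hg
    exact ⟨m, by ext; simp⟩
  have hcX : Nat.card X = Nat.card (Multiplicative (ZMod 4)) := by
    rw [hX, Nat.card_zpowers, hordx, Nat.card_congr (Multiplicative.toAdd (α := ZMod 4)), Nat.card_zmod]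
  have eX : X ≃* Multiplicative (ZMod 4) := mulEquivOfCyclicCardEq hcX
  have efinal : G ≃* Multiplicative ((Fin n → ZMod 2) × ZMod 4) :=
    e1.symm.trans ((eX.prodCongr eCmul).trans
      (MulEquiv.prodComm.trans (MulEquiv.prodMultiplicative _ _).symm))
  exact ⟨n, ⟨efinal⟩⟩
end Structure

lemma zmod2_add_self : ∀ a : ZMod 2, a + a = 0 := by decide

lemma card_concrete (n : ℕ) :
    Nat.card (Multiplicative ((Fin n → ZMod 2) × ZMod 4)) =
      2 * Nat.card {x : Multiplicative ((Fin n → ZMod 2) × ZMod 4) // x ^ 2 = 1} := by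
  have e : {x : Multiplicative ((Fin n → ZMod 2) × ZMod 4) // x ^ 2 = 1}
      ≃ (Fin n → ZMod 2) × {c : ZMod 4 // c + c = 0} :=
  { toFun := fun x => (x.1.toAdd.1, ⟨x.1.toAdd.2, by
      have hx := x.2
      rw [pow_two] at hx
      have h0 : x.1.toAdd + x.1.toAdd = (0 : (Fin n → ZMod 2) × ZMod 4) :=
        congrArg Multiplicative.toAdd hx
      exact congrArg Prod.snd h0⟩)
    invFun := fun p => ⟨Multiplicative.ofAdd (p.1, p.2.1), by
      rw [pow_two]
      apply Multiplicative.toAdd.injective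
      show (p.1, p.2.1) + (p.1, p.2.1) = (0 : (Fin n → ZMod 2) × ZMod 4)
      refine Prod.ext ?_ ?_
      · funext i; exact zmod2_add_self (p.1 i)
      · exact p.2.2⟩
    left_inv := fun x => rfl
    right_inv := fun p => rfl }
  rw [Nat.card_congr e, Nat.card_prod,
    Nat.card_congr (Multiplicative.toAdd (α := (Fin n → ZMod 2) × ZMod 4)), Nat.card_prod]
  have h1 : Nat.card (Fin n → ZMod 2) = 2 ^ n := by
    rw [Nat.card_pi]
    simp [Nat.card_zmod]
  have h2 : Nat.card {c : ZMod 4 // c + c = 0} = 2 := by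
    rw [Nat.card_eq_fintype_card]
    decide
  rw [h1, h2, Nat.card_zmod]
  ring


/-- `α(G) = |L₁(G)| / |G|`, where `L₁(G)` is the set of cyclic subgroups of `G`. -/
noncomputable def alpha (G : Type*) [Group G] : ℚ :=
  (Nat.card {H : Subgroup G // IsCyclic H} : ℚ) / (Nat.card G : ℚ)

section Main
variable {G : Type*} [CommGroup G] [Finite G]

theorem alpha_eq_iff : alpha G = 3 / 4 ↔ Nat.card G = 2 * Nat.card {x : G // x ^ 2 = 1} := by
  classical
  have : Fintype G := Fintype.ofFinite G
  set T := Finset.univ.filter (fun H : Subgroup G => IsCyclic H) with hT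
  set T1 := T.filter (fun H : Subgroup G => Nat.card H ≤ 2) with hT1
  set Tp := T.filter (fun H : Subgroup G => ¬ Nat.card H ≤ 2) with hTp
  have hsplit : T1.card + Tp.card = T.card :=
    Finset.card_filter_add_card_filter_not _
  have hGsum : Fintype.card G = (∑ H ∈ T1, (Nat.card H).totient)
      + ∑ H ∈ Tp, (Nat.card H).totient := by
    rw [card_eq_sum_totient, ← Finset.sum_filter_add_sum_filter_not T
      (fun H : Subgroup G => Nat.card H ≤ 2)]
  have hT1sum : ∑ H ∈ T1, (Nat.card H).totient = T1.card := by
    rw [Finset.card_eq_sum_ones]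
    refine Finset.sum_congr rfl fun H hH => ?_
    have h2 : Nat.card H ≤ 2 := (Finset.mem_filter.mp hH).2
    have hpos : 0 < Nat.card H := Nat.card_pos
    interval_cases h : Nat.card H <;> simp
  have hKa : T1.card = Nat.card {x : G // x ^ 2 = 1} := by
    rw [hT1, hT, small_count, Nat.card_eq_fintype_card, Fintype.card_subtype]
  have hplo : 2 * Tp.card ≤ ∑ H ∈ Tp, (Nat.card H).totient := by
    calc 2 * Tp.card = ∑ _H ∈ Tp, 2 := by rw [Finset.sum_const, smul_eq_mul, mul_comm]
    _ ≤ _ := Finset.sum_le_sum fun H hH => by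
        have h2 : ¬ Nat.card H ≤ 2 := (Finset.mem_filter.mp hH).2
        have hpos : 0 < (Nat.card H).totient := Nat.totient_pos.mpr Nat.card_pos
        have hne1 : (Nat.card H).totient ≠ 1 := by
          intro h1
          rcases Nat.totient_eq_one_iff.mp h1 with h | h <;> omega
        omega
  have hT1pos : 1 ≤ T1.card := by
    refine Finset.card_pos.mpr ⟨⊥, ?_⟩
    simp only [hT1, hT, Finset.mem_filter, Finset.mem_univ, true_and]
    exact ⟨Bot.isCyclic, by simp [Subgroup.card_bot]⟩
  have hcardT : Nat.card {H : Subgroup G // IsCyclic H} = T.card := by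
    rw [Nat.card_eq_fintype_card, Fintype.card_subtype]
  have hGpos : 0 < Fintype.card G := Fintype.card_pos
  have halpha : alpha G = 3 / 4 ↔ 4 * T.card = 3 * Fintype.card G := by
    unfold alpha
    rw [hcardT, Nat.card_eq_fintype_card (α := G),
      div_eq_div_iff (by exact_mod_cast hGpos.ne') (by norm_num)]
    constructor
    · intro h
      have h' : (4 * T.card : ℚ) = 3 * Fintype.card G := by push_cast at h ⊢; linarith
      exact_mod_cast h'
    · intro h
      have h' : ((T.card : ℚ)) * 4 = 3 * Fintype.card G := by exact_mod_cast by linarith [h]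
      linarith
  rw [halpha]
  have hNG : Nat.card G = Fintype.card G := Nat.card_eq_fintype_card
  constructor
  · intro h
    rw [← hsplit] at h
    rw [hGsum, hT1sum] at h
    have hdvd : Nat.card (MonoidHom.ker (powMonoidHom 2 : G →* G)) ∣ Nat.card G :=
      Subgroup.card_subgroup_dvd_card _
    rw [← card_ker_sq, ← hKa] at hdvd
    obtain ⟨k, hk⟩ := hdvd
    rw [hNG, hGsum, hT1sum] at hk
    have hk1 : 1 ≤ k := by
      rcases Nat.eq_zero_or_pos k with h0 | h1
      · exfalso; rw [h0, mul_zero] at hk; omega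
      · exact h1
    have hk2 : k ≤ 2 := by
      by_contra hgt
      push_neg at hgt
      have h3 : T1.card * 3 ≤ T1.card * k := Nat.mul_le_mul_left _ (by omega)
      rw [← hk] at h3
      omega
    interval_cases k
    · exfalso; rw [mul_one] at hk; omega
    · rw [hNG, hGsum, hT1sum, ← hKa]
      omega
  · intro hc
    have h4 := pow_four_of_card hc
    have hTp4 : ∀ H ∈ Tp, (Nat.card H).totient = 2 := by
      intro H hH
      have hmem := Finset.mem_filter.mp hH
      have hcyc : IsCyclic H := (Finset.mem_filter.mp hmem.1).2
      have h2 : ¬ Nat.card H ≤ 2 := hmem.2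
      obtain ⟨g, hg⟩ := hcyc.exists_generator
      have hord : orderOf g = Nat.card H := orderOf_eq_card_of_forall_mem_zpowers hg
      have hg4 : g ^ 4 = 1 := by
        apply Subtype.ext
        push_cast
        exact h4 (g : G)
      have hdvd4 : Nat.card H ∣ 4 := by
        rw [← hord]
        exact orderOf_dvd_of_pow_eq_one hg4
      have hle4 : Nat.card H ≤ 4 := Nat.le_of_dvd (by norm_num) hdvd4
      have hc4 : Nat.card H = 4 := by
        interval_cases hcc : Nat.card H
        · norm_num at hdvd4
        · rfl
      rw [hc4]
      rfl
    have hS : ∑ H ∈ Tp, (Nat.card H).totient = 2 * Tp.card := by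
      rw [Finset.sum_congr rfl hTp4, Finset.sum_const, smul_eq_mul, mul_comm]
    rw [hNG, hGsum, hT1sum, hS, ← hKa] at hc
    rw [← hsplit, hGsum, hT1sum, hS]
    omega
end Main

theorem stmt_4 (G : Type*) [CommGroup G] [Finite G] :
    alpha G = 3 / 4 ↔
      ∃ n : ℕ, Nonempty (G ≃* Multiplicative ((Fin n → ZMod 2) × ZMod 4)) := by
  rw [alpha_eq_iff]
  constructor
  · intro h
    exact structure_of_card (pow_four_of_card h) h
  · rintro ⟨n, ⟨e⟩⟩
    have h1 : Nat.card G = Nat.card (Multiplicative ((Fin n → ZMod 2) × ZMod 4)) :=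
      Nat.card_congr e.toEquiv
    have h2 : Nat.card {x : G // x ^ 2 = 1}
        = Nat.card {y : Multiplicative ((Fin n → ZMod 2) × ZMod 4) // y ^ 2 = 1} :=
      Nat.card_congr (e.toEquiv.subtypeEquiv fun x => by
        rw [show e.toEquiv x = e x from rfl, ← map_pow, EmbeddingLike.map_eq_one_iff])
    rw [h1, h2, card_concrete]
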